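/- Let q = p^w > 2 be a prime power and g₁, g₂, g₃, g₄ primitive elements of F_q. The permutations π_{g₁,g₂} and π_{g₃,g₄} (defined by π_{g,h}(x)=y iff g^x + h^y = 1 on {1,...,q-2}) coincide if and only if there exists j ∈ {0,1,...,w-1} such that g₃ = g₁^{p^j} and g₄ = g₂^{p^j}. -/

import Mathlib

open Polynomial in
lemma golomb_aux_pow_prime_pow {F : Type*} [Field F] (p : ℕ) (hp : p.Prime) [CharP F p] :
    ∀ m : ℕ, 1 ≤ m → ((X + 1 : F[X]) ^ m = X ^ m + 1) → ∃ j, m = p ^ j := by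
  intro m
  induction m using Nat.strong_induction_on with
  | _ m ih =>
    intro hm h
    haveI : Fact p.Prime := ⟨hp⟩
    by_cases hpm : p ∣ m
    · obtain ⟨m', rfl⟩ := hpm
      have hm' : 1 ≤ m' := by
        rcases Nat.eq_zero_or_pos m' with rfl | h'
        · simp at hm
        · exact h'
      have h2 : ((X + 1 : F[X]) ^ m') ^ p = ((X ^ m' + 1 : F[X])) ^ p := by
        rw [← pow_mul, mul_comm m' p, h, add_pow_char, ← pow_mul, mul_comm p m', one_pow]
      have h3 : (X + 1 : F[X]) ^ m' = X ^ m' + 1 := by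
        have := frobenius_inj F[X] p
        exact this h2
      obtain ⟨j, hj⟩ := ih m' (by
        have : 1 < p := hp.one_lt
        calc m' < p * m' := by nlinarith
        ) hm' h3
      exact ⟨j + 1, by rw [hj, pow_succ, mul_comm]⟩
    · have hd := congrArg derivative h
      simp only [derivative_pow, derivative_add, derivative_X_pow, derivative_X,
        derivative_one, add_zero, mul_one] at hd
      have hmF : (m : F) ≠ 0 := fun h0 => hpm ((CharP.cast_eq_zero_iff F p m).mp h0)
      have hC : (C (m : F) : F[X]) ≠ 0 := by simpa using Polynomial.C_ne_zero.mpr hmF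
      have h4 : (X + 1 : F[X]) ^ (m - 1) = X ^ (m - 1) := by
        exact mul_left_cancel₀ hC hd
      have h5 := congrArg (eval (0 : F)) h4
      simp only [eval_pow, eval_add, eval_X, eval_one, zero_add, one_pow] at h5
      rcases Nat.lt_or_ge m 2 with h2 | h2
      · exact ⟨0, by rw [pow_zero]; omega⟩
      · exfalso
        rw [zero_pow (by omega : m - 1 ≠ 0)] at h5
        exact one_ne_zero h5

lemma golomb_aux_exists_pow {G : Type*} [Group G] {g a : G} {n : ℕ}
    (hn : orderOf g = n) (hn0 : 0 < n) (ha : a ∈ Subgroup.zpowers g) :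
    ∃ x : ℕ, x < n ∧ g ^ x = a := by
  obtain ⟨k, hk⟩ := Subgroup.mem_zpowers_iff.mp ha
  have hnz : (0 : ℤ) < (n : ℤ) := by exact_mod_cast hn0
  have h1 : 0 ≤ k % (n : ℤ) := Int.emod_nonneg k hnz.ne'
  have h2 : k % (n : ℤ) < (n : ℤ) := Int.emod_lt_of_pos k hnz
  refine ⟨(k % (n : ℤ)).toNat, by omega, ?_⟩
  have h3 : g ^ (k % (n : ℤ)) = g ^ k := by
    rw [← hn]; exact zpow_mod_orderOf g k
  rw [← zpow_natCast, Int.toNat_of_nonneg h1, h3, hk]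

/-- π_{g₁,g₂} = π_{g₃,g₄} iff (g₃,g₄) = (g₁^{p^j}, g₂^{p^j}) for some j < w. -/
theorem golomb_permutations_coincide_iff_conjugate
    {F : Type*} [Field F] [Fintype F] (p w q : ℕ) (hp : p.Prime) (hq : q = p ^ w)
    (hcard : Fintype.card F = q) (hq2 : 2 < q)
    (g₁ g₂ g₃ g₄ : Fˣ)
    (hg₁ : ∀ x : Fˣ, x ∈ Subgroup.zpowers g₁)
    (hg₂ : ∀ x : Fˣ, x ∈ Subgroup.zpowers g₂)
    (hg₃ : ∀ x : Fˣ, x ∈ Subgroup.zpowers g₃)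
    (hg₄ : ∀ x : Fˣ, x ∈ Subgroup.zpowers g₄)
    (π₁ π₂ : ℕ → ℕ)
    (hπ₁ : ∀ x ∈ Set.Icc 1 (q - 2),
      π₁ x ∈ Set.Icc 1 (q - 2) ∧ (g₁ : F) ^ x + (g₂ : F) ^ (π₁ x) = 1)
    (hπ₂ : ∀ x ∈ Set.Icc 1 (q - 2),
      π₂ x ∈ Set.Icc 1 (q - 2) ∧ (g₃ : F) ^ x + (g₄ : F) ^ (π₂ x) = 1) :
    (∀ x ∈ Set.Icc 1 (q - 2), π₁ x = π₂ x) ↔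
      ∃ j < w, g₃ = g₁ ^ (p ^ j) ∧ g₄ = g₂ ^ (p ^ j) := by
  classical
  have hw : 0 < w := by
    by_contra h0
    push_neg at h0
    interval_cases w
    simp [hq] at hq2
  have hcardU : Fintype.card Fˣ = q - 1 := by
    rw [Fintype.card_units, hcard]
  have hn2 : 2 ≤ q - 1 := by omega
  have ho₁ : orderOf g₁ = q - 1 := by
    rw [orderOf_eq_card_of_forall_mem_zpowers hg₁, Nat.card_eq_fintype_card, hcardU]
  have ho₂ : orderOf g₂ = q - 1 := by
    rw [orderOf_eq_card_of_forall_mem_zpowers hg₂, Nat.card_eq_fintype_card, hcardU]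
  have ho₃ : orderOf g₃ = q - 1 := by
    rw [orderOf_eq_card_of_forall_mem_zpowers hg₃, Nat.card_eq_fintype_card, hcardU]
  have ho₄ : orderOf g₄ = q - 1 := by
    rw [orderOf_eq_card_of_forall_mem_zpowers hg₄, Nat.card_eq_fintype_card, hcardU]
  -- characteristic
  haveI hcharF : CharP F p := by
    obtain ⟨n', hr, hcard'⟩ := FiniteField.card F (ringChar F)
    have hpr : p = ringChar F := by
      have hdvd : p ∣ ringChar F ^ (n' : ℕ) := by
        rw [← hcard', hcard, hq]
        exact dvd_pow_self p hw.ne'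
      have := hp.dvd_of_dvd_pow hdvd
      exact ((Nat.prime_dvd_prime_iff_eq hp hr).mp this)
    rw [hpr]
    exact ringChar.charP F
  haveI : Fact p.Prime := ⟨hp⟩
  constructor
  · -- forward direction
    intro heq
    -- extract exponents m₁ m₂ with g₃ = g₁ ^ m₁, g₄ = g₂ ^ m₂
    have hne3 : g₃ ≠ 1 := by
      intro h
      rw [h, orderOf_one] at ho₃; omega
    have hne4 : g₄ ≠ 1 := by
      intro h
      rw [h, orderOf_one] at ho₄; omega
    obtain ⟨m₁, hm₁lt, hgm₁⟩ := golomb_aux_exists_pow ho₁ (by omega) (hg₁ g₃)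
    obtain ⟨m₂, hm₂lt, hgm₂⟩ := golomb_aux_exists_pow ho₂ (by omega) (hg₂ g₄)
    have hm₁pos : 1 ≤ m₁ := by
      rcases Nat.eq_zero_or_pos m₁ with rfl | h'
      · rw [pow_zero] at hgm₁; exact absurd hgm₁.symm hne3
      · exact h'
    have hm₂pos : 1 ≤ m₂ := by
      rcases Nat.eq_zero_or_pos m₂ with rfl | h'
      · rw [pow_zero] at hgm₂; exact absurd hgm₂.symm hne4
      · exact h'
    have h3F : (g₃ : F) = (g₁ : F) ^ m₁ := by
      rw [← hgm₁]; exact (Units.val_pow_eq_pow_val g₁ m₁)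
    have h4F : (g₄ : F) = (g₂ : F) ^ m₂ := by
      rw [← hgm₂]; exact (Units.val_pow_eq_pow_val g₂ m₂)
    -- gcd(q-1, m₁) = 1
    have hgcd : Nat.gcd (q - 1) m₁ = 1 := by
      have h := orderOf_pow (n := m₁) g₁
      rw [hgm₁, ho₃, ho₁] at h
      rcases Nat.div_eq_self.mp h.symm with h' | h'
      · omega
      · exact h'
    -- injectivity: c ^ m₁ = 1 → c = 1
    have hinj : ∀ c : F, c ^ m₁ = 1 → c = 1 := by
      intro c hc
      have hc0 : c ≠ 0 := by
        intro h0
        rw [h0, zero_pow (by omega : m₁ ≠ 0)] at hc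
        exact zero_ne_one hc
      have hcu1 : (Units.mk0 c hc0) ^ m₁ = 1 := by
        ext
        rw [Units.val_pow_eq_pow_val]
        simpa using hc
      have hd1 : orderOf (Units.mk0 c hc0) ∣ m₁ := orderOf_dvd_of_pow_eq_one hcu1
      have hd2 : orderOf (Units.mk0 c hc0) ∣ q - 1 := by
        rw [← hcardU]; exact orderOf_dvd_card
      have hdd : orderOf (Units.mk0 c hc0) = 1 :=
        Nat.eq_one_of_dvd_one (by rw [← hgcd]; exact Nat.dvd_gcd hd2 hd1)
      have hcu_one : (Units.mk0 c hc0) = 1 := orderOf_eq_one_iff.mp hdd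
      simpa using congrArg Units.val hcu_one
    -- key relation R
    have hR : ∀ a : F, a ≠ 0 → a ≠ 1 → (1 - a) ^ m₂ = 1 - a ^ m₁ := by
      intro a ha0 ha1
      obtain ⟨x, hxlt, hxa⟩ := golomb_aux_exists_pow ho₁ (by omega) (hg₁ (Units.mk0 a ha0))
      have hx0 : x ≠ 0 := by
        rintro rfl
        apply ha1
        have := congrArg Units.val hxa
        simpa using this.symm
      have hxIcc : x ∈ Set.Icc 1 (q - 2) := Set.mem_Icc.mpr ⟨by omega, by omega⟩
      obtain ⟨hmem1, he1⟩ := hπ₁ x hxIcc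
      obtain ⟨hmem2, he2⟩ := hπ₂ x hxIcc
      have hπe := heq x hxIcc
      have hax : (g₁ : F) ^ x = a := by
        rw [← Units.val_pow_eq_pow_val, hxa]; rfl
      have h1a : (1 : F) - a = (g₂ : F) ^ (π₁ x) := by
        rw [← hax]; linear_combination -he1
      calc (1 - a) ^ m₂ = ((g₂ : F) ^ (π₁ x)) ^ m₂ := by rw [h1a]
        _ = ((g₂ : F) ^ m₂) ^ (π₁ x) := by rw [← pow_mul, mul_comm, pow_mul]
        _ = (g₄ : F) ^ (π₂ x) := by rw [← h4F, hπe]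
        _ = 1 - (g₃ : F) ^ x := by linear_combination he2
        _ = 1 - a ^ m₁ := by
              rw [h3F, ← hax, ← pow_mul, mul_comm, pow_mul]
    -- Lemma A : (-1)^m₁ = -1
    have hA : (-1 : F) ^ m₁ = -1 := by
      by_cases h2 : (-1 : F) = 1
      · rw [h2, one_pow]
      · have hsq : ((-1 : F) ^ m₁) * ((-1 : F) ^ m₁) = 1 := by
          rw [← mul_pow]; norm_num
        rcases mul_self_eq_one_iff.mp hsq with h | h
        · exact absurd (hinj _ h) h2
        · exact h
    -- Lemma B : (1-c)^m₁ = 1 - c^m₁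
    have hB : ∀ c : F, (1 - c) ^ m₁ = 1 - c ^ m₁ := by
      intro c
      by_cases hc0 : c = 0
      · subst hc0
        rw [zero_pow (by omega : m₁ ≠ 0)]; simp
      by_cases hc1 : c = 1
      · subst hc1
        rw [one_pow, sub_self, zero_pow (by omega : m₁ ≠ 0)]
      have h1c : (1 : F) - c ≠ 0 := sub_ne_zero.mpr (Ne.symm hc1)
      set b : F := -c / (1 - c) with hb
      have hb0 : b ≠ 0 := div_ne_zero (neg_ne_zero.mpr hc0) h1c
      have hb1 : b ≠ 1 := by
        intro h
        rw [hb, div_eq_one_iff_eq h1c] at h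
        have : (0 : F) = 1 := by linear_combination h
        exact zero_ne_one this
      have hbc : (1 - c) * (1 - b) = 1 := by
        rw [hb]; field_simp; ring
      have h1 := hR c hc0 hc1
      have h2 := hR b hb0 hb1
      have hmul : (1 - c ^ m₁) * (1 - b ^ m₁) = 1 := by
        rw [← h1, ← h2, ← mul_pow, hbc, one_pow]
      have hbm : b ^ m₁ = - (c ^ m₁) / (1 - c) ^ m₁ := by
        rw [hb, div_pow, neg_pow, hA, neg_one_mul]
      rw [hbm] at hmul
      have h1cm : (1 - c) ^ m₁ ≠ 0 := pow_ne_zero _ h1c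
      have hcm : c ^ m₁ ≠ 0 := pow_ne_zero _ hc0
      have key : c ^ m₁ * (1 - (1 - c) ^ m₁ - c ^ m₁) = 0 := by
        field_simp at hmul
        linear_combination hmul
      rcases mul_eq_zero.mp key with h | h
      · exact absurd h hcm
      · linear_combination -h
    -- polynomial identity pointwise
    have hpoly : ∀ z : F, (z + 1) ^ m₁ = z ^ m₁ + 1 := by
      intro z
      have hz : (-z : F) ^ m₁ = -(z ^ m₁) := by
        rw [neg_pow, hA, neg_one_mul]
      have h := hB (-z)
      rw [hz, sub_neg_eq_add, sub_neg_eq_add] at h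
      rw [show (z + 1 : F) = 1 + z by ring, h, add_comm]
    -- polynomial identity
    have hpm : (Polynomial.X + 1 : Polynomial F) ^ m₁ = Polynomial.X ^ m₁ + 1 := by
      have hmon1 : (Polynomial.X + 1 : Polynomial F).Monic := by
        simpa using Polynomial.monic_X_add_C (1 : F)
      have hmonic1 : ((Polynomial.X + 1 : Polynomial F) ^ m₁).Monic := hmon1.pow _
      have hmonic2 : ((Polynomial.X : Polynomial F) ^ m₁ + 1).Monic := by
        simpa using Polynomial.monic_X_pow_add_C (1 : F) (by omega : m₁ ≠ 0)
      set P : Polynomial F := (Polynomial.X + 1) ^ m₁ - (Polynomial.X ^ m₁ + 1) with hP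
      by_cases hP0 : P = 0
      · exact sub_eq_zero.mp (by rw [← hP]; exact hP0)
      exfalso
      apply hP0
      have hdeg1 : ((Polynomial.X + 1 : Polynomial F) ^ m₁).natDegree = m₁ := by
        rw [hmon1.natDegree_pow,
          show (Polynomial.X + 1 : Polynomial F).natDegree = 1 from by
            simpa using Polynomial.natDegree_X_add_C (1 : F), mul_one]
      have hdeg2 : ((Polynomial.X : Polynomial F) ^ m₁ + 1).natDegree = m₁ := by
        have := Polynomial.natDegree_X_pow_add_C (n := m₁) (r := (1 : F))
        simpa using this
      have hdlt : P.degree < ((Polynomial.X + 1 : Polynomial F) ^ m₁).degree := by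
        apply Polynomial.degree_sub_lt
        · rw [Polynomial.degree_eq_natDegree hmonic1.ne_zero,
            Polynomial.degree_eq_natDegree hmonic2.ne_zero, hdeg1, hdeg2]
        · exact hmonic1.ne_zero
        · rw [hmonic1.leadingCoeff, hmonic2.leadingCoeff]
      have hdegpow : ((Polynomial.X + 1 : Polynomial F) ^ m₁).degree = (m₁ : ℕ) := by
        rw [Polynomial.degree_eq_natDegree hmonic1.ne_zero, hdeg1]
      have hndlt : P.natDegree < m₁ := by
        apply (Polynomial.natDegree_lt_iff_degree_lt hP0).mpr
        rw [← hdegpow]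
        exact hdlt
      apply Polynomial.eq_zero_of_natDegree_lt_card_of_eval_eq_zero P (f := fun x : F => x)
        Function.injective_id
      · intro z
        simp only [hP, Polynomial.eval_sub, Polynomial.eval_pow, Polynomial.eval_add,
          Polynomial.eval_X, Polynomial.eval_one]
        rw [hpoly z]; ring
      · calc P.natDegree < m₁ := hndlt
          _ < Fintype.card F := by omega
    obtain ⟨j, hj⟩ := golomb_aux_pow_prime_pow p hp m₁ hm₁pos hpm
    have hjw : j < w := by
      have : p ^ j < p ^ w := by
        rw [← hj, ← hq]; omega
      exact (Nat.pow_lt_pow_iff_right hp.one_lt).mp this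
    -- m₂-powers equal m₁-powers
    have hsame : ∀ b : F, b ^ m₂ = b ^ m₁ := by
      intro b
      by_cases hb0 : b = 0
      · subst hb0
        rw [zero_pow (by omega : m₂ ≠ 0), zero_pow (by omega : m₁ ≠ 0)]
      by_cases hb1 : b = 1
      · subst hb1; rw [one_pow, one_pow]
      have ha0 : (1 : F) - b ≠ 0 := sub_ne_zero.mpr (Ne.symm hb1)
      have ha1' : (1 : F) - b ≠ 1 := by
        intro h
        apply hb0
        linear_combination -h
      have h := hR (1 - b) (ha0) (ha1')
      rw [sub_sub_cancel] at h
      rw [h, hB b]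
      ring
    refine ⟨j, hjw, ?_, ?_⟩
    · rw [← hj, ← hgm₁]
    · have : (g₂ : F) ^ m₂ = (g₂ : F) ^ (p ^ j) := by
        rw [← hj]; exact hsame (g₂ : F)
      ext
      rw [← h4F] at this
      rw [this]
      exact (Units.val_pow_eq_pow_val g₂ (p ^ j)).symm
  · -- backward direction
    rintro ⟨j, hj, hg3, hg4⟩ x hx
    obtain ⟨hmem1, he1⟩ := hπ₁ x hx
    obtain ⟨hmem2, he2⟩ := hπ₂ x hx
    have h3F : (g₃ : F) = (g₁ : F) ^ (p ^ j) := by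
      rw [hg3]; exact Units.val_pow_eq_pow_val g₁ (p ^ j)
    have h4F : (g₄ : F) = (g₂ : F) ^ (p ^ j) := by
      rw [hg4]; exact Units.val_pow_eq_pow_val g₂ (p ^ j)
    have he1' : (g₃ : F) ^ x + (g₄ : F) ^ (π₁ x) = 1 := by
      have h : ((g₁ : F) ^ x + (g₂ : F) ^ (π₁ x)) ^ (p ^ j) = 1 := by
        rw [he1, one_pow]
      rw [add_pow_char_pow] at h
      rw [h3F, h4F, ← pow_mul, ← pow_mul, mul_comm (p ^ j) x, mul_comm (p ^ j) (π₁ x),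
        pow_mul, pow_mul]
      exact h
    have hcancel : (g₄ : F) ^ (π₁ x) = (g₄ : F) ^ (π₂ x) :=
      add_left_cancel (he1'.trans he2.symm)
    have hu : g₄ ^ (π₁ x) = g₄ ^ (π₂ x) := by
      ext
      rw [Units.val_pow_eq_pow_val, Units.val_pow_eq_pow_val]
      exact hcancel
    have hlt1 : π₁ x < orderOf g₄ := by
      rw [ho₄]
      have := (Set.mem_Icc.mp hmem1).2
      omega
    have hlt2 : π₂ x < orderOf g₄ := by
      rw [ho₄]
      have := (Set.mem_Icc.mp hmem2).2
      omega
    exact pow_injOn_Iio_orderOf hlt1 hlt2 hu
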